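/- arXiv:1007.0862 — 2 statements merged into one kernel-verified Lean document; each statement's English description precedes it below -/
import Mathlib

section
/- For every x ∈ V_n, every t ≥ 0 and every k ≥ 0, P_n( |ξ̂^x_t| ≥ k ) ≤ P( Z_t ≥ k ), where (Z_t) is the branching process with Z_0 = 1 and Z_{t+1} = r · Σ_{j=1}^{Z_t} β_{t+1,j} for an i.i.d. array {β_{t,j} : t ≥ 1, j ≥ 1} of Bernoulli(q) random variables; i.e., |ξ̂^x_t| is stochastically dominated by the Galton–Watson process in which each individual independently has r children with probability q and no children with probability 1−q. -/
open MeasureTheory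
open scoped ENNReal
/-- A directed-graph structure on `V_n = Fin n`: each vertex `x` has an ordered `r`-tuple
of distinct input vertices `y_1(x), …, y_r(x)`, all different from `x`. -/
def IsGraph {n r : ℕ} (y : Fin n → Fin r → Fin n) : Prop :=
  ∀ x, Function.Injective (y x) ∧ ∀ i, y x i ≠ x

/-- The uniform probability measure on the space of graph structures (the tuples are chosen
uniformly and independently for each vertex, which is the same as choosing the whole
structure uniformly). -/
noncomputable def graphMeasure (n r : ℕ) : Measure {y : Fin n → Fin r → Fin n // IsGraph y} :=
  (Nat.card {y : Fin n → Fin r → Fin n // IsGraph y} : ℝ≥0∞)⁻¹ • Measure.count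

/-- `μ` is the joint law of i.i.d. Bernoulli(q) random variables indexed by `Fin n × ℕ`
(this property characterizes the product measure uniquely). -/
def IsBernoulliProduct (q : ℝ) {n : ℕ} (μ : Measure (Fin n → ℕ → Bool)) : Prop :=
  ∀ (S : Finset (Fin n × ℕ)) (v : Fin n × ℕ → Bool),
    μ {ω | ∀ p ∈ S, ω p.1 p.2 = v p} =
      ∏ p ∈ S, (if v p then ENNReal.ofReal q else ENNReal.ofReal (1 - q))

/-- The threshold contact process on the graph `y`, driven by `B`, started from `ξ0`:
`ξ_{t+1}(x) = 1` iff `B x (t+1) = 1` and `ξ_t(y_i(x)) = 1` for some `i`. -/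
def xi {n r : ℕ} (y : Fin n → Fin r → Fin n) (B : Fin n → ℕ → Bool)
    (ξ0 : Fin n → Bool) : ℕ → Fin n → Bool
  | 0 => ξ0
  | t + 1 => fun x => B x (t + 1) && decide (∃ i : Fin r, xi y B ξ0 t (y x i) = true)

/-- The dual threshold contact process: `ξ̂_{t+1}(x) = 1` iff there are `z` and `i` with
`y_i(z) = x`, `ξ̂_t(z) = 1` and `B z t = 1`. -/
def xihat {n r : ℕ} (y : Fin n → Fin r → Fin n) (B : Fin n → ℕ → Bool)
    (ξ0 : Fin n → Bool) : ℕ → Fin n → Bool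
  | 0 => ξ0
  | t + 1 => fun x =>
      decide (∃ z, ∃ i : Fin r, y z i = x ∧ xihat y B ξ0 t z = true ∧ B z t = true)

/-- The number of occupied sites of a configuration. -/
def numOnes {n : ℕ} (ξ : Fin n → Bool) : ℕ := (Finset.univ.filter fun x => ξ x = true).card

/-- The joint law `P_n` of the random graph and the Bernoulli variables. -/
noncomputable def Pn (n r : ℕ) (μB : Measure (Fin n → ℕ → Bool)) :
    Measure ({y : Fin n → Fin r → Fin n // IsGraph y} × (Fin n → ℕ → Bool)) :=
  (graphMeasure n r).prod μB
/-- The law of `β_1 + ⋯ + β_k` for i.i.d. Bernoulli(p) variables `β_j`. -/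
noncomputable def bernoulliSumLaw (p : ℝ≥0∞) (hp : p ≤ 1) : ℕ → PMF ℕ
  | 0 => PMF.pure 0
  | k + 1 =>
      (PMF.ofFintype (fun b : Bool => cond b p (1 - p)) (by simp [hp])).bind fun b =>
        (bernoulliSumLaw p hp k).map fun s => s + (if b then 1 else 0)

/-- The law at time `t` of the branching process `Z` with `Z_0 = 1` and
`Z_{t+1} = r · Σ_{j=1}^{Z_t} β_{t+1,j}`, where the `β`'s are i.i.d. Bernoulli(p); i.e. the
Galton–Watson process in which each individual independently has `r` children with
probability `p` and no children with probability `1-p`. -/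
noncomputable def gwLaw (p : ℝ≥0∞) (hp : p ≤ 1) (r : ℕ) : ℕ → PMF ℕ
  | 0 => PMF.pure 1
  | t + 1 => (gwLaw p hp r t).bind fun z => (bernoulliSumLaw p hp z).map fun s => r * s

/-! ### Auxiliary development -/

open scoped Classical

/-- Bernoulli weight. -/
noncomputable def bwt (p : ℝ≥0∞) : Bool → ℝ≥0∞ := fun b => if b then p else 1 - p

section Aux
variable {p : ℝ≥0∞}

lemma bwt_sum (hp : p ≤ 1) : bwt p false + bwt p true = 1 := by
  simp [bwt, tsub_add_cancel_of_le hp]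

lemma Wone {ι : Type} [Fintype ι] [DecidableEq ι] (hp : p ≤ 1) :
    ∑ c : ι → Bool, ∏ i, bwt p (c i) = 1 := by
  rw [← Fintype.piFinset_univ (β := fun _ : ι => Bool), ← Finset.prod_univ_sum]
  have h : ∀ i : ι, ∑ b : Bool, bwt p b = 1 := fun _ => by
    rw [Fintype.sum_bool, add_comm]; exact bwt_sum hp
  calc ∏ i : ι, ∑ b : Bool, bwt p b = ∏ _i : ι, 1 := Finset.prod_congr rfl (fun i _ => h i)
  _ = 1 := Finset.prod_const_one

lemma tsum_map_mul {α β : Type*} (q : PMF α) (g : α → β) (h : β → ℝ≥0∞) :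
    ∑' b, (q.map g) b * h b = ∑' a, q a * h (g a) := by
  simp only [PMF.map_apply]
  calc ∑' b, (∑' a, if b = g a then q a else 0) * h b
      = ∑' b, ∑' a, (if b = g a then q a else 0) * h b := by
        congr 1; funext b; rw [ENNReal.tsum_mul_right]
    _ = ∑' a, ∑' b, (if b = g a then q a else 0) * h b := ENNReal.tsum_comm
    _ = ∑' a, q a * h (g a) := by
        congr 1; funext a
        rw [tsum_eq_single (g a) (by intro b hb; simp [hb])]
        simp

lemma tsum_bind_mul {α β : Type*} (q : PMF α) (f : α → PMF β) (h : β → ℝ≥0∞) :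
    ∑' b, (q.bind f) b * h b = ∑' a, q a * ∑' b, (f a) b * h b := by
  simp only [PMF.bind_apply]
  calc ∑' b, (∑' a, q a * (f a) b) * h b
      = ∑' b, ∑' a, q a * (f a) b * h b := by
        congr 1; funext b; rw [ENNReal.tsum_mul_right]
    _ = ∑' a, ∑' b, q a * (f a) b * h b := ENNReal.tsum_comm
    _ = ∑' a, q a * ∑' b, (f a) b * h b := by
        congr 1; funext a
        simp_rw [mul_assoc]
        rw [ENNReal.tsum_mul_left]

lemma tsum_bsl_succ_mul (hp : p ≤ 1) (m : ℕ) (g : ℕ → ℝ≥0∞) :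
    ∑' s, bernoulliSumLaw p hp (m+1) s * g s
      = (1 - p) * (∑' s, bernoulliSumLaw p hp m s * g s)
        + p * (∑' s, bernoulliSumLaw p hp m s * g (s + 1)) := by
  show ∑' s, ((PMF.ofFintype (fun b : Bool => cond b p (1 - p)) (by simp [hp])).bind fun b =>
        (bernoulliSumLaw p hp m).map fun s => s + (if b then 1 else 0)) s * g s = _
  rw [tsum_bind_mul, tsum_bool]
  simp only [PMF.ofFintype_apply, tsum_map_mul]
  simp

/-- The binomial identity: summing a function of the number of successes within `A`
over all Bernoulli configurations gives its expectation under the binomial law. -/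
lemma key (hp : p ≤ 1) : ∀ (m : ℕ) (ι : Type) [Fintype ι] [DecidableEq ι]
    (A : Finset ι), A.card = m → ∀ (g : ℕ → ℝ≥0∞),
    ∑ c : ι → Bool, (∏ i, bwt p (c i)) * g ((A.filter fun z => c z = true).card)
      = ∑' s, bernoulliSumLaw p hp m s * g s
  | 0 => by
    intro ι _ _ A hA g
    rw [Finset.card_eq_zero] at hA
    subst hA
    simp only [Finset.filter_empty, Finset.card_empty]
    rw [← Finset.sum_mul, Wone hp, one_mul]
    rw [show bernoulliSumLaw p hp 0 = PMF.pure 0 from rfl]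
    rw [tsum_eq_single 0 (by intro s hs; simp [PMF.pure_apply, hs])]
    simp
  | (m+1) => by
    intro ι _ _ A hA g
    have hA0 : A.Nonempty := Finset.card_pos.mp (by omega)
    obtain ⟨a, ha⟩ := hA0
    set ι' := {j : ι // j ≠ a}
    set A' : Finset ι' := (A.erase a).subtype (· ≠ a) with hA'def
    have hcard : A'.card = m := by
      rw [hA'def, Finset.card_subtype,
        Finset.filter_true_of_mem (fun x hx => Finset.ne_of_mem_erase hx),
        Finset.card_erase_of_mem ha, hA]
      omega
    set e := Equiv.piSplitAt a (fun _ : ι => Bool) with hedef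
    have hsplit : ∀ (v : Bool) (d : ι' → Bool),
        (e.symm (v, d)) a = v ∧ ∀ (j : ι) (hj : j ≠ a), (e.symm (v, d)) j = d ⟨j, hj⟩ := by
      intro v d
      constructor
      · simp [hedef, Equiv.piSplitAt_symm_apply]
      · intro j hj; simp [hedef, Equiv.piSplitAt_symm_apply, hj]
    rw [← Equiv.sum_comp e.symm
      (fun c => (∏ i, bwt p (c i)) * g ((A.filter fun z => c z = true).card))]
    rw [Fintype.sum_prod_type]
    have hprod : ∀ (v : Bool) (d : ι' → Bool),
        (∏ i, bwt p ((e.symm (v, d)) i)) = bwt p v * ∏ j : ι', bwt p (d j) := by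
      intro v d
      rw [← Finset.prod_erase_mul Finset.univ _ (Finset.mem_univ a), mul_comm]
      congr 1
      · congr 1; exact (hsplit v d).1
      · rw [Finset.prod_subtype (Finset.univ.erase a)
          (p := fun j => j ≠ a) (fun x => by simp [Finset.mem_erase])
          (fun x => bwt p ((e.symm (v, d)) x))]
        refine Finset.prod_congr rfl fun j _ => ?_
        rw [(hsplit v d).2 j.1 j.2, Subtype.eta]
    have hcardsplit : ∀ (v : Bool) (d : ι' → Bool),
        ((A.filter fun z => (e.symm (v, d)) z = true).card)
          = ((A'.filter fun z => d z = true).card) + (if v then 1 else 0) := by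
      intro v d
      have herase : ((A.erase a).filter fun z => (e.symm (v, d)) z = true).card
          = (A'.filter fun z => d z = true).card := by
        have hst : Finset.subtype (fun x => x ≠ a)
            ((A.erase a).filter (fun z => (e.symm (v, d)) z = true))
            = A'.filter (fun z => d z = true) := by
          ext ⟨j, hj⟩
          simp only [Finset.mem_subtype, Finset.mem_filter, hA'def]
          rw [(hsplit v d).2 j hj]
        have hcc := congrArg Finset.card hst
        rw [Finset.card_subtype, Finset.filter_true_of_mem
          (fun x hx => Finset.ne_of_mem_erase (Finset.mem_filter.mp hx).1)] at hcc
        exact hcc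
      conv_lhs => rw [← Finset.insert_erase ha, Finset.filter_insert]
      rcases v with _ | _
      · rw [if_neg (by rw [(hsplit false d).1]; simp), herase]
        simp
      · rw [if_pos (by rw [(hsplit true d).1]),
          Finset.card_insert_of_notMem
            (fun hmem => (Finset.mem_erase.mp (Finset.mem_filter.mp hmem).1).1 rfl),
          herase]
        simp
    calc ∑ v : Bool, ∑ d : ι' → Bool,
          (∏ i, bwt p ((e.symm (v, d)) i)) * g ((A.filter fun z => (e.symm (v, d)) z = true).card)
        = ∑ v : Bool, bwt p v * ∑ d : ι' → Bool,
            (∏ j, bwt p (d j)) * g ((A'.filter fun z => d z = true).card + (if v then 1 else 0)) := by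
          refine Finset.sum_congr rfl fun v _ => ?_
          rw [Finset.mul_sum]
          refine Finset.sum_congr rfl fun d _ => ?_
          rw [hprod v d, hcardsplit v d, mul_assoc]
      _ = ∑ v : Bool, bwt p v * ∑' s, bernoulliSumLaw p hp m s
            * g (s + (if v then 1 else 0)) := by
          refine Finset.sum_congr rfl fun v _ => ?_
          rw [key hp m ι' A' hcard (fun s => g (s + (if v then 1 else 0)))]
      _ = ∑' s, bernoulliSumLaw p hp (m+1) s * g s := by
          rw [tsum_bsl_succ_mul hp m g, Fintype.sum_bool]
          simp [bwt, add_comm]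

/-- The tail expectation of `r` times a binomial, as a function of the number of trials. -/
noncomputable def Tb (hp : p ≤ 1) (r k m : ℕ) : ℝ≥0∞ :=
  ∑' s, bernoulliSumLaw p hp m s * (if k ≤ r * s then 1 else 0)

lemma Tb_mono (hp : p ≤ 1) (r k : ℕ) : Monotone (Tb hp r k) := by
  apply monotone_nat_of_le_succ
  intro m
  rw [show Tb hp r k (m+1) = _ from tsum_bsl_succ_mul hp m _]
  have h2 : Tb hp r k m ≤ ∑' s, bernoulliSumLaw p hp m s * (if k ≤ r * (s+1) then 1 else 0) := by
    refine ENNReal.tsum_le_tsum fun s => mul_le_mul_right ?_ _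
    split_ifs with h1 h2
    · exact le_rfl
    · exact absurd (h1.trans (Nat.mul_le_mul_left r (by omega))) h2
    · exact zero_le'
    · exact le_rfl
  calc Tb hp r k m = ((1-p) + p) * Tb hp r k m := by rw [tsub_add_cancel_of_le hp, one_mul]
    _ = (1-p) * Tb hp r k m + p * Tb hp r k m := by rw [add_mul]
    _ ≤ _ := add_le_add le_rfl (mul_le_mul_right h2 _)

lemma g_layer {g : ℕ → ℝ≥0∞} (hg : Monotone g) (m : ℕ) :
    g m = g 0 + ∑' j : ℕ, if j + 1 ≤ m then (g (j+1) - g j) else 0 := by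
  rw [tsum_eq_sum (s := Finset.range m)
    (by intro j hj; rw [if_neg]; simp only [Finset.mem_range] at hj; omega)]
  induction m with
  | zero => simp
  | succ m ih =>
    rw [Finset.sum_range_succ, if_pos le_rfl]
    have : ∀ j ∈ Finset.range m, (if j + 1 ≤ m + 1 then g (j+1) - g j else 0)
        = (if j + 1 ≤ m then g (j+1) - g j else 0) := by
      intro j hj; simp only [Finset.mem_range] at hj
      rw [if_pos (by omega), if_pos (by omega)]
    rw [Finset.sum_congr rfl this, ← add_assoc, ← ih]
    exact (add_tsub_cancel_of_le (hg (Nat.le_succ m))).symm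

lemma expand {α : Type*} (ν : α → ℝ≥0∞) (f : α → ℕ) {g : ℕ → ℝ≥0∞} (hg : Monotone g) :
    ∑' a, ν a * g (f a) = (∑' a, ν a) * g 0
      + ∑' j : ℕ, (g (j+1) - g j) * ∑' a, ν a * (if j + 1 ≤ f a then 1 else 0) := by
  calc ∑' a, ν a * g (f a)
      = ∑' a, (ν a * g 0 + ∑' j : ℕ, (g (j+1) - g j) * (ν a * if j + 1 ≤ f a then 1 else 0)) := by
        congr 1; funext a
        rw [g_layer hg (f a), mul_add, ← ENNReal.tsum_mul_left]
        congr 1; congr 1; funext j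
        split_ifs <;> simp [mul_comm]
    _ = (∑' a, ν a * g 0) + ∑' a, ∑' j : ℕ, (g (j+1) - g j) * (ν a * if j + 1 ≤ f a then 1 else 0) :=
        ENNReal.tsum_add
    _ = _ := by
        rw [ENNReal.tsum_mul_right, ENNReal.tsum_comm]
        congr 1
        congr 1; funext j
        rw [ENNReal.tsum_mul_left]

lemma dom {α : Type*} (ν : α → ℝ≥0∞) (f : α → ℕ) (μ : ℕ → ℝ≥0∞)
    (hmass : ∑' a, ν a = ∑' m, μ m)
    (hdom : ∀ j : ℕ, (∑' a, ν a * (if j ≤ f a then 1 else 0))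
      ≤ ∑' m, μ m * (if j ≤ m then 1 else 0))
    {g : ℕ → ℝ≥0∞} (hg : Monotone g) :
    ∑' a, ν a * g (f a) ≤ ∑' m, μ m * g m := by
  have h2 := expand μ id hg
  simp only [id] at h2
  rw [expand ν f hg, h2, hmass]
  exact add_le_add le_rfl (ENNReal.tsum_le_tsum fun j => mul_le_mul_right (hdom (j+1)) _)

end Aux

/-! ### Process lemmas -/

lemma xihat_congr {n r : ℕ} (y : Fin n → Fin r → Fin n) (B B' : Fin n → ℕ → Bool)
    (ξ0 : Fin n → Bool) (u : ℕ) (h : ∀ z s, s < u → B z s = B' z s) :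
    ∀ t, t ≤ u → xihat y B ξ0 t = xihat y B' ξ0 t := by
  intro t
  induction t with
  | zero => intro _; rfl
  | succ t ih =>
    intro ht
    funext x
    show decide _ = decide _
    rw [ih (by omega)]
    simp only [show ∀ z, B z t = B' z t from fun z => h z t (by omega)]

lemma xihat_succ_le {n r : ℕ} (y : Fin n → Fin r → Fin n) (B : Fin n → ℕ → Bool)
    (ξ0 : Fin n → Bool) (t : ℕ) :
    numOnes (xihat y B ξ0 (t+1))
      ≤ r * (Finset.univ.filter fun z =>
          xihat y B ξ0 t z = true ∧ B z t = true).card := by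
  classical
  set A := Finset.univ.filter fun z => xihat y B ξ0 t z = true ∧ B z t = true with hA
  have hsub : (Finset.univ.filter fun x => xihat y B ξ0 (t+1) x = true)
      ⊆ (A ×ˢ (Finset.univ : Finset (Fin r))).image fun zi => y zi.1 zi.2 := by
    intro x hx
    simp only [Finset.mem_filter, Finset.mem_univ, true_and] at hx
    rw [show xihat y B ξ0 (t+1) x = decide _ from rfl, decide_eq_true_eq] at hx
    obtain ⟨z, i, hyz, h1, h2⟩ := hx
    refine Finset.mem_image.mpr ⟨(z, i), ?_, hyz⟩
    simp [hA, Finset.mem_product, h1, h2]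
  calc numOnes (xihat y B ξ0 (t+1))
      ≤ ((A ×ˢ (Finset.univ : Finset (Fin r))).image fun zi => y zi.1 zi.2).card :=
        Finset.card_le_card hsub
    _ ≤ (A ×ˢ (Finset.univ : Finset (Fin r))).card := Finset.card_image_le
    _ = A.card * r := by rw [Finset.card_product, Finset.card_univ, Fintype.card_fin]
    _ = r * A.card := Nat.mul_comm _ _

/-- Extension of a finite block of driving variables to all times. -/
def extB {n : ℕ} (t : ℕ) (b : Fin n → Fin t → Bool) : Fin n → ℕ → Bool :=
  fun z s => if h : s < t then b z ⟨s, h⟩ else false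

/-- Splitting off the last time step. -/
def splitE (n t : ℕ) : (Fin n → Fin (t+1) → Bool) ≃ (Fin n → Fin t → Bool) × (Fin n → Bool) where
  toFun b := (fun z s => b z ⟨s.1, by omega⟩, fun z => b z ⟨t, by omega⟩)
  invFun bc := fun z s => if h : s.1 < t then bc.1 z ⟨s.1, h⟩ else bc.2 z
  left_inv b := by
    funext z s
    by_cases h : s.1 < t
    · simp only [dif_pos h]
    · simp only [dif_neg h]; congr 1; exact (Fin.ext (by omega : t = s.1))
  right_inv bc := by
    refine Prod.ext ?_ ?_
    · funext z s; simp only []; rw [dif_pos s.2]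
    · funext z; simp only []; rw [dif_neg (by omega)]

lemma extB_glue_lt {n : ℕ} (t : ℕ) (b' : Fin n → Fin t → Bool) (c : Fin n → Bool)
    (z : Fin n) (s : ℕ) (hs : s < t) :
    extB (t+1) ((splitE n t).symm (b', c)) z s = extB t b' z s := by
  simp only [extB, splitE, Equiv.coe_fn_symm_mk, dif_pos (by omega : s < t + 1), dif_pos hs]

lemma extB_glue_last {n : ℕ} (t : ℕ) (b' : Fin n → Fin t → Bool) (c : Fin n → Bool)
    (z : Fin n) : extB (t+1) ((splitE n t).symm (b', c)) z t = c z := by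
  simp only [extB, splitE, Equiv.coe_fn_symm_mk, dif_pos (by omega : t < t + 1)]
  rw [dif_neg (by omega)]

/-- weight of a finite block -/
noncomputable def W2 {n : ℕ} (p : ℝ≥0∞) {t : ℕ} (b : Fin n → Fin t → Bool) : ℝ≥0∞ :=
  ∏ z, ∏ s, bwt p (b z s)

lemma W2_total {n t : ℕ} {p : ℝ≥0∞} (hp : p ≤ 1) :
    ∑ b : Fin n → Fin t → Bool, W2 p b = 1 := by
  classical
  have := Wone (ι := Fin n × Fin t) (p := p) hp
  rw [← Equiv.sum_comp (Equiv.curry (Fin n) (Fin t) Bool)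
    (fun b : Fin n → Fin t → Bool => W2 p b)] at *
  rw [← this]
  refine Finset.sum_congr rfl fun c _ => ?_
  exact (Fintype.prod_prod_type fun i => bwt p (c i)).symm

lemma W2_split {n t : ℕ} {p : ℝ≥0∞} (b' : Fin n → Fin t → Bool) (c : Fin n → Bool) :
    W2 p ((splitE n t).symm (b', c)) = W2 p b' * ∏ z, bwt p (c z) := by
  rw [W2, W2, ← Finset.prod_mul_distrib]
  refine Finset.prod_congr rfl fun z _ => ?_
  rw [Fin.prod_univ_castSucc]
  congr 1
  · refine Finset.prod_congr rfl fun s _ => ?_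
    congr 1
    show (if h : (s.castSucc).1 < t then b' z ⟨(s.castSucc).1, h⟩ else c z) = b' z s
    rw [dif_pos (show (s.castSucc).1 < t from s.2)]
    exact congrArg (b' z) (Fin.ext rfl)
  · congr 1
    show (if h : (Fin.last t).1 < t then b' z ⟨(Fin.last t).1, h⟩ else c z) = c z
    exact dif_neg (by simp [Fin.last])

/-- The main induction: per graph structure, the dual process is dominated. -/
lemma key_induction {n r : ℕ} (y : Fin n → Fin r → Fin n) (ξ0 : Fin n → Bool)
    (hξ0 : numOnes ξ0 = 1) {p : ℝ≥0∞} (hp : p ≤ 1) :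
    ∀ (t k : ℕ),
    ∑ b : Fin n → Fin t → Bool, W2 p b
        * (if k ≤ numOnes (xihat y (extB t b) ξ0 t) then 1 else 0)
      ≤ ∑' m, gwLaw p hp r t m * (if k ≤ m then 1 else 0) := by
  intro t
  induction t with
  | zero =>
    intro k
    have h1 : ∀ b : Fin n → Fin 0 → Bool, xihat y (extB 0 b) ξ0 0 = ξ0 := fun _ => rfl
    have h2 : ∑' m, gwLaw p hp r 0 m * (if k ≤ m then 1 else 0)
        = (if k ≤ 1 then 1 else 0) := by
      rw [show gwLaw p hp r 0 = PMF.pure 1 from rfl,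
        tsum_eq_single 1 (by intro m hm; simp [PMF.pure_apply, hm])]
      simp
    rw [h2]
    calc ∑ b : Fin n → Fin 0 → Bool, W2 p b * (if k ≤ numOnes (xihat y (extB 0 b) ξ0 0) then 1 else 0)
        = ∑ b : Fin n → Fin 0 → Bool, W2 p b * (if k ≤ 1 then 1 else 0) := by
          refine Finset.sum_congr rfl fun b _ => by rw [h1 b, hξ0]
      _ = (if k ≤ 1 then 1 else 0) := by
          rw [← Finset.sum_mul, W2_total hp, one_mul]
      _ ≤ _ := le_rfl
  | succ t ih =>
    intro k
    -- split the sum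
    rw [← Equiv.sum_comp (splitE n t).symm
      (fun b => W2 p b * (if k ≤ numOnes (xihat y (extB (t+1) b) ξ0 (t+1)) then 1 else 0)),
      Fintype.sum_prod_type]
    have hcoh : ∀ (b' : Fin n → Fin t → Bool) (c : Fin n → Bool),
        xihat y (extB (t+1) ((splitE n t).symm (b', c))) ξ0 t
          = xihat y (extB t b') ξ0 t := fun b' c =>
      xihat_congr y _ _ ξ0 t (fun z s hs => extB_glue_lt t b' c z s hs) t le_rfl
    have hbound : ∀ (b' : Fin n → Fin t → Bool) (c : Fin n → Bool),
        numOnes (xihat y (extB (t+1) ((splitE n t).symm (b', c))) ξ0 (t+1))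
          ≤ r * (((Finset.univ.filter fun z => xihat y (extB t b') ξ0 t z = true)).filter
              (fun z => c z = true)).card := by
      intro b' c
      refine (xihat_succ_le y _ ξ0 t).trans ?_
      apply Nat.mul_le_mul_left
      apply Finset.card_le_card
      intro z hz
      simp only [Finset.mem_filter, Finset.mem_univ, true_and] at hz ⊢
      rw [hcoh b' c, extB_glue_last t b' c z] at hz
      exact hz
    -- per b' estimate via the binomial identity
    have hstep : ∀ b' : Fin n → Fin t → Bool,
        ∑ c : Fin n → Bool, W2 p ((splitE n t).symm (b', c))
            * (if k ≤ numOnes (xihat y (extB (t+1) ((splitE n t).symm (b', c))) ξ0 (t+1))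
               then 1 else 0)
          ≤ W2 p b' * Tb hp r k (numOnes (xihat y (extB t b') ξ0 t)) := by
      intro b'
      set A : Finset (Fin n) := Finset.univ.filter fun z => xihat y (extB t b') ξ0 t z = true
        with hAdef
      have hAcard : A.card = numOnes (xihat y (extB t b') ξ0 t) := rfl
      calc ∑ c : Fin n → Bool, W2 p ((splitE n t).symm (b', c))
            * (if k ≤ numOnes (xihat y (extB (t+1) ((splitE n t).symm (b', c))) ξ0 (t+1))
               then 1 else 0)
          ≤ ∑ c : Fin n → Bool, W2 p b' * ((∏ z, bwt p (c z))
              * (if k ≤ r * ((A.filter fun z => c z = true).card) then 1 else 0)) := by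
            refine Finset.sum_le_sum fun c _ => ?_
            rw [W2_split b' c, mul_assoc]
            refine mul_le_mul_right (mul_le_mul_right ?_ _) _
            split_ifs with hc1 hc2
            · exact le_rfl
            · exact absurd (hc1.trans (hbound b' c)) hc2
            · exact zero_le'
            · exact le_rfl
        _ = W2 p b' * Tb hp r k (numOnes (xihat y (extB t b') ξ0 t)) := by
            rw [← Finset.mul_sum]
            congr 1
            rw [key hp A.card (Fin n) A rfl (fun s => if k ≤ r * s then 1 else 0), hAcard]
            rfl
    -- sum over b' and apply domination
    calc ∑ b' : Fin n → Fin t → Bool, ∑ c : Fin n → Bool,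
          W2 p ((splitE n t).symm (b', c))
            * (if k ≤ numOnes (xihat y (extB (t+1) ((splitE n t).symm (b', c))) ξ0 (t+1))
               then 1 else 0)
        ≤ ∑ b' : Fin n → Fin t → Bool,
            W2 p b' * Tb hp r k (numOnes (xihat y (extB t b') ξ0 t)) :=
          Finset.sum_le_sum fun b' _ => hstep b'
      _ ≤ ∑' m, gwLaw p hp r t m * Tb hp r k m := by
          rw [← tsum_fintype (L := SummationFilter.unconditional _)]
          refine dom _ _ _ ?_ ?_ (Tb_mono hp r k)
          · rw [tsum_fintype, W2_total hp, PMF.tsum_coe]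
          · intro j
            rw [tsum_fintype]
            exact ih j
      _ = ∑' m, gwLaw p hp r (t+1) m * (if k ≤ m then 1 else 0) := by
          rw [show gwLaw p hp r (t+1) = (gwLaw p hp r t).bind
              (fun z => (bernoulliSumLaw p hp z).map fun s => r * s) from rfl,
            tsum_bind_mul]
          refine tsum_congr fun m => ?_
          congr 1
          rw [tsum_map_mul]
          rfl

/-! ### Measure-theoretic reduction -/

section MeasureRed

variable {n : ℕ} (t : ℕ)

/-- restriction of the driving variables to the first `t` times -/
def restr (t : ℕ) (B : Fin n → ℕ → Bool) : Fin n → Fin t → Bool := fun z s => B z s.1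

lemma measurable_cyl {t : ℕ} (b : Fin n → Fin t → Bool) :
    MeasurableSet {B : Fin n → ℕ → Bool | restr t B = b} := by
  have : {B : Fin n → ℕ → Bool | restr t B = b}
      = ⋂ z, ⋂ s : Fin t, {B : Fin n → ℕ → Bool | B z s.1 = b z s} := by
    ext B
    simp only [Set.mem_setOf_eq, Set.mem_iInter, funext_iff, restr]
  rw [this]
  refine MeasurableSet.iInter fun z => MeasurableSet.iInter fun s => ?_
  have hm : Measurable fun B : Fin n → ℕ → Bool => B z (s.1 : ℕ) :=
    (measurable_pi_apply (s.1 : ℕ)).comp (measurable_pi_apply z)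
  exact hm (measurableSet_singleton (b z s))

lemma cyl_measure {q : ℝ} (hq0 : 0 ≤ q) (hq1 : q ≤ 1)
    (μB : Measure (Fin n → ℕ → Bool)) (hμB : IsBernoulliProduct q μB)
    {t : ℕ} (b : Fin n → Fin t → Bool) :
    μB {B | restr t B = b} = W2 (ENNReal.ofReal q) b := by
  classical
  have hset : {B : Fin n → ℕ → Bool | restr t B = b}
      = {ω | ∀ pr ∈ (Finset.univ ×ˢ Finset.range t : Finset (Fin n × ℕ)),
          ω pr.1 pr.2 = (if h : pr.2 < t then b pr.1 ⟨pr.2, h⟩ else false)} := by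
    ext ω
    simp only [Set.mem_setOf_eq, funext_iff, restr]
    constructor
    · intro h pr hpr
      obtain ⟨_, h2⟩ := Finset.mem_product.mp hpr
      have hlt : pr.2 < t := Finset.mem_range.mp h2
      rw [dif_pos hlt]
      exact h pr.1 ⟨pr.2, hlt⟩
    · intro h z s
      have := h (z, s.1) (Finset.mem_product.mpr ⟨Finset.mem_univ _, Finset.mem_range.mpr s.2⟩)
      simpa [dif_pos s.2] using this
  rw [hset, hμB]
  rw [show (∏ pr ∈ (Finset.univ ×ˢ Finset.range t : Finset (Fin n × ℕ)),
      if (if h : pr.2 < t then b pr.1 ⟨pr.2, h⟩ else false) = true then ENNReal.ofReal q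
        else ENNReal.ofReal (1 - q))
    = ∏ pr ∈ (Finset.univ ×ˢ Finset.range t : Finset (Fin n × ℕ)),
      (fun (z : Fin n) (u : ℕ) =>
        if (if h : u < t then b z ⟨u, h⟩ else false) = true then ENNReal.ofReal q
          else ENNReal.ofReal (1 - q)) pr.1 pr.2 from rfl,
    Finset.prod_product' Finset.univ (Finset.range t)
      (fun (z : Fin n) (u : ℕ) =>
        if (if h : u < t then b z ⟨u, h⟩ else false) = true then ENNReal.ofReal q
          else ENNReal.ofReal (1 - q))]
  refine Finset.prod_congr rfl fun z _ => ?_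
  rw [← Fin.prod_univ_eq_prod_range
    (fun s => if (if h : s < t then b z ⟨s, h⟩ else false) then ENNReal.ofReal q
      else ENNReal.ofReal (1 - q)) t]
  refine Finset.prod_congr rfl fun s _ => ?_
  rw [dif_pos s.2]
  have h1mq : ENNReal.ofReal (1 - q) = 1 - ENNReal.ofReal q := by
    rw [ENNReal.ofReal_sub 1 hq0, ENNReal.ofReal_one]
  cases hb : b z ⟨(s : ℕ), s.2⟩ <;> simp [bwt, h1mq, hb, Fin.eta]



variable {r : ℕ}

lemma hext (y : Fin n → Fin r → Fin n) (ξ0 : Fin n → Bool) (t : ℕ) (B : Fin n → ℕ → Bool) :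
    xihat y B ξ0 t = xihat y (extB t (restr t B)) ξ0 t :=
  xihat_congr y B _ ξ0 t (fun z s hs => by simp [extB, restr, dif_pos hs]) t le_rfl

/-- the section of the event at a fixed graph structure -/
def sectSet (y : Fin n → Fin r → Fin n) (ξ0 : Fin n → Bool) (t k : ℕ) :
    Set (Fin n → ℕ → Bool) := {B | k ≤ numOnes (xihat y B ξ0 t)}

lemma sect_repr (y : Fin n → Fin r → Fin n) (ξ0 : Fin n → Bool) (t k : ℕ) :
    sectSet y ξ0 t k
      = ⋃ b ∈ Finset.univ.filter
          (fun b : Fin n → Fin t → Bool => k ≤ numOnes (xihat y (extB t b) ξ0 t)),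
          {B | restr t B = b} := by
  classical
  ext B
  simp only [sectSet, Set.mem_setOf_eq, Set.mem_iUnion, Finset.mem_filter, Finset.mem_univ,
    true_and, exists_prop]
  constructor
  · intro h
    exact ⟨restr t B, by rwa [← hext], rfl⟩
  · rintro ⟨b, hb, hBb⟩
    rw [hext y ξ0 t B, hBb]
    exact hb

lemma sect_meas (y : Fin n → Fin r → Fin n) (ξ0 : Fin n → Bool) (t k : ℕ) :
    MeasurableSet (sectSet y ξ0 t k) := by
  classical
  rw [sect_repr]
  exact Finset.measurableSet_biUnion _ (fun b _ => measurable_cyl b)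

lemma sect_val {q : ℝ} (hq0 : 0 ≤ q) (hq1 : q ≤ 1)
    (μB : Measure (Fin n → ℕ → Bool)) (hμB : IsBernoulliProduct q μB)
    (y : Fin n → Fin r → Fin n) (ξ0 : Fin n → Bool) (t k : ℕ) :
    μB (sectSet y ξ0 t k)
      = ∑ b : Fin n → Fin t → Bool, W2 (ENNReal.ofReal q) b
          * (if k ≤ numOnes (xihat y (extB t b) ξ0 t) then 1 else 0) := by
  classical
  have hdisj : Set.PairwiseDisjoint
      (↑(Finset.univ.filter
        (fun b : Fin n → Fin t → Bool => k ≤ numOnes (xihat y (extB t b) ξ0 t))))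
      (fun b : Fin n → Fin t → Bool => {B : Fin n → ℕ → Bool | restr t B = b}) := by
    intro b _ b' _ hne
    refine Set.disjoint_left.mpr fun B hB hB' => hne ?_
    rw [← hB, ← hB']
  rw [sect_repr, measure_biUnion_finset hdisj (fun b _ => measurable_cyl b),
    Finset.sum_filter]
  refine Finset.sum_congr rfl fun b _ => ?_
  split_ifs with h
  · rw [cyl_measure hq0 hq1 μB hμB b, mul_one]
  · rw [mul_zero]

end MeasureRed

/-- **Stochastic domination by the branching process.** For every `x`, `t` and `k`,
`P_n(|ξ̂^x_t| ≥ k) ≤ P(Z_t ≥ k)`. -/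
theorem dual_dominated_by_branching
    (r : ℕ) (hr : 1 ≤ r) (q : ℝ) (hq0 : 0 ≤ q) (hq1 : q ≤ 1)
    (n : ℕ) (hn : r < n)
    (μB : Measure (Fin n → ℕ → Bool)) (hμB : IsBernoulliProduct q μB)
    (x : Fin n) (t k : ℕ) :
    Pn n r μB {ω | k ≤ numOnes (xihat ω.1.1 ω.2 (fun v => decide (v = x)) t)} ≤
      (gwLaw (ENNReal.ofReal q) (ENNReal.ofReal_le_one.mpr hq1) r t).toMeasure
        {z : ℕ | k ≤ z} := by
  classical
  set p : ℝ≥0∞ := ENNReal.ofReal q with hpdef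
  set hp : p ≤ 1 := ENNReal.ofReal_le_one.mpr hq1 with hhp
  set ξ0 : Fin n → Bool := fun v => decide (v = x) with hxi0
  have hξ0 : numOnes ξ0 = 1 := by
    simp [numOnes, hxi0, Finset.filter_eq']
  -- the target value
  set V : ℝ≥0∞ := ∑' m, gwLaw p hp r t m * (if k ≤ m then 1 else 0) with hV
  have hRHS : (gwLaw p hp r t).toMeasure {z : ℕ | k ≤ z} = V := by
    rw [PMF.toMeasure_apply _ (MeasurableSpace.measurableSet_top)]
    refine tsum_congr fun m => ?_
    rw [Set.indicator_apply]
    simp only [Set.mem_setOf_eq]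
    by_cases h : k ≤ m
    · rw [if_pos h, if_pos h, mul_one]
    · rw [if_neg h, if_neg h, mul_zero]
  -- finiteness of μB
  have huniv : μB Set.univ = 1 := by
    have h := hμB ∅ (fun _ => false)
    simpa using h
  haveI : IsFiniteMeasure μB := ⟨by rw [huniv]; exact ENNReal.one_lt_top⟩
  -- the event and its measurability
  set E : Set ({y : Fin n → Fin r → Fin n // IsGraph y} × (Fin n → ℕ → Bool)) :=
    {ω | k ≤ numOnes (xihat ω.1.1 ω.2 ξ0 t)} with hEdef
  have hsec : ∀ Y : {y : Fin n → Fin r → Fin n // IsGraph y},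
      Prod.mk Y ⁻¹' E = sectSet Y.1 ξ0 t k := fun Y => rfl
  have hEmeas : MeasurableSet E := by
    have hre : E = ⋃ Y : {y : Fin n → Fin r → Fin n // IsGraph y},
        ({Y} : Set _) ×ˢ sectSet Y.1 ξ0 t k := by
      ext ⟨Y, B⟩
      simp only [hEdef, Set.mem_setOf_eq, Set.mem_iUnion, Set.mem_prod, Set.mem_singleton_iff,
        sectSet]
      constructor
      · intro h; exact ⟨Y, rfl, h⟩
      · rintro ⟨Y', rfl, h⟩; exact h
    rw [hre]
    exact MeasurableSet.iUnion fun Y =>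
      (measurableSet_singleton Y).prod (sect_meas Y.1 ξ0 t k)
  -- compute Pn of the event
  letI : Fintype {y : Fin n → Fin r → Fin n // IsGraph y} := Fintype.ofFinite _
  rw [show Pn n r μB E = (graphMeasure n r).prod μB E from rfl,
    Measure.prod_apply hEmeas]
  rw [show graphMeasure n r
      = (Nat.card {y : Fin n → Fin r → Fin n // IsGraph y} : ℝ≥0∞)⁻¹ • Measure.count from rfl,
    lintegral_smul_measure, lintegral_count, tsum_fintype]
  set N : ℕ := Nat.card {y : Fin n → Fin r → Fin n // IsGraph y} with hN
  -- per-graph bound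
  have hperY : ∀ Y : {y : Fin n → Fin r → Fin n // IsGraph y},
      μB (Prod.mk Y ⁻¹' E) ≤ V := by
    intro Y
    rw [hsec Y, sect_val hq0 hq1 μB hμB Y.1 ξ0 t k]
    exact key_induction Y.1 ξ0 hξ0 hp t k
  have hsum : ∑ Y : {y : Fin n → Fin r → Fin n // IsGraph y}, μB (Prod.mk Y ⁻¹' E)
      ≤ (N : ℝ≥0∞) * V := by
    calc ∑ Y : {y : Fin n → Fin r → Fin n // IsGraph y}, μB (Prod.mk Y ⁻¹' E)
        ≤ ∑ _Y : {y : Fin n → Fin r → Fin n // IsGraph y}, V :=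
          Finset.sum_le_sum fun Y _ => hperY Y
      _ = (Fintype.card {y : Fin n → Fin r → Fin n // IsGraph y} : ℝ≥0∞) * V := by
          rw [Finset.sum_const, Finset.card_univ, nsmul_eq_mul]
      _ = (N : ℝ≥0∞) * V := by rw [hN, Nat.card_eq_fintype_card]
  have hNinv : ((N : ℝ≥0∞))⁻¹ * (N : ℝ≥0∞) ≤ 1 := by
    rcases eq_or_ne ((N : ℝ≥0∞)) 0 with h | h
    · simp [h]
    · rw [ENNReal.inv_mul_cancel h (ENNReal.natCast_ne_top _)]
  calc ((N : ℝ≥0∞))⁻¹ * ∑ Y : {y : Fin n → Fin r → Fin n // IsGraph y}, μB (Prod.mk Y ⁻¹' E)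
      ≤ ((N : ℝ≥0∞))⁻¹ * ((N : ℝ≥0∞) * V) := mul_le_mul_right hsum _
    _ = (((N : ℝ≥0∞))⁻¹ * (N : ℝ≥0∞)) * V := (mul_assoc _ _ _).symm
    _ ≤ 1 * V := mul_le_mul_left hNinv _
    _ = V := one_mul V
    _ = (gwLaw p hp r t).toMeasure {z : ℕ | k ≤ z} := hRHS.symm
end

section
/- Fix an integer g ≥ 1, a realization of the graph (y_i(x)) and of the dual Bernoulli variables {B̂^x_t}, and let A ⊆ V_n with |A| = m. Say that a vertex z ∈ V_n gives birth at time t if ξ̂^A_t(z) = 1 and B̂^z_t = 1. Define B_0 = {σ ∈ T^0_m : z^σ gives birth at time 0} and, for 0 ≤ j ≤ g−2, B_{j+1} = {σ ∈ J(B_j) : [ψ(A)](σ) = 0 and z^σ gives birth at time j+1}. Then for every 1 ≤ j ≤ g, |ξ̂^A_j| ≥ |J(B_{j−1}) ∩ {ψ(A) = 0}|. -/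
open MeasureTheory
open scoped ENNReal
/-- A vertex of the forest `T_m`: a root index in `Fin m` together with a path of length
`i ≤ g` with steps in `Fin r`. -/
abbrev Tvert (m g r : ℕ) := Fin m × Σ i : Fin (g + 1), (Fin (i : ℕ) → Fin r)

namespace Tvert

/-- The generation (path length) of a vertex of `T_m`. -/
def len {m g r : ℕ} (σ : Tvert m g r) : ℕ := σ.2.1

/-- Truncation of `σ` to path length `l` (for `l ≤ len σ`): the prefix `(σ_0, …, σ_l)`. -/
def trunc {m g r : ℕ} (σ : Tvert m g r) (l : ℕ) : Tvert m g r :=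
  ⟨σ.1, ⟨⟨min l (len σ), lt_of_le_of_lt (min_le_right _ _) σ.2.1.2⟩,
    fun k => σ.2.2 ⟨k, lt_of_lt_of_le k.2 (min_le_right _ _)⟩⟩⟩

/-- The tuple `(σ_0, σ_1, …, σ_i)` of a vertex, as a list of naturals. -/
def key {m g r : ℕ} (σ : Tvert m g r) : List ℕ :=
  (σ.1 : ℕ) :: (List.ofFn σ.2.2).map Fin.val

/-- The order `≺` on `T_m`: shorter vertices first; among vertices of the same length,
lexicographic order on the tuple `(σ_0, …, σ_i)`. -/
def prec {m g r : ℕ} (σ σ' : Tvert m g r) : Prop :=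
  len σ < len σ' ∨ (len σ = len σ' ∧ List.Lex (· < ·) (key σ) (key σ'))

/-- `σ → σ'` iff `σ' = (σ, j)` for some `j`, i.e. `σ'` extends `σ` by one step. -/
def edge {m g r : ℕ} (σ σ' : Tvert m g r) : Prop :=
  len σ' = len σ + 1 ∧ trunc σ' (len σ) = σ

open scoped Classical in
/-- `J(B)`: the set of vertices reachable by one directed edge from `B`. -/
noncomputable def J {m g r : ℕ} (B : Finset (Tvert m g r)) : Finset (Tvert m g r) :=
  Finset.univ.filter fun σ' => ∃ σ ∈ B, edge σ σ'

end Tvert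

/-- `z^σ = y_{σ_i}(y_{σ_{i-1}}(⋯ y_{σ_1}(x_{σ_0})⋯))`, where `x_1 < … < x_m` enumerates `A`. -/
noncomputable def zvert {n r m g : ℕ} (y : Fin n → Fin r → Fin n)
    (A : Finset (Fin n)) (hA : A.card = m) (σ : Tvert m g r) : Fin n :=
  (List.ofFn σ.2.2).foldl (fun v j => y v j) (A.orderIsoOfFin hA σ.1 : Fin n)

open scoped Classical in
/-- `A^σ = {z^{σ'} : σ' ≺ σ}`. -/
noncomputable def Aseen {n r m g : ℕ} (y : Fin n → Fin r → Fin n)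
    (A : Finset (Fin n)) (hA : A.card = m) (σ : Tvert m g r) : Finset (Fin n) :=
  (Finset.univ.filter fun σ' => Tvert.prec σ' σ).image (zvert y A hA)

open scoped Classical in
/-- The configuration `ψ(A) ∈ {0,1}^{T_m}`: roots get `0`; a non-root vertex `σ` gets `0`
if a strict prefix of `σ` already has value `1` or if `z^σ ∉ A^σ`, and gets `1` otherwise. -/
noncomputable def psi {n r m g : ℕ} (y : Fin n → Fin r → Fin n)
    (A : Finset (Fin n)) (hA : A.card = m) : Tvert m g r → Bool := fun σ =>
  if h0 : Tvert.len σ = 0 then false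
  else
    decide (zvert y A hA σ ∈ Aseen y A hA σ) &&
      !(List.range (Tvert.len σ)).any fun l =>
        if hl : l < Tvert.len σ then psi y A hA (Tvert.trunc σ l) else false
termination_by σ => Tvert.len σ
decreasing_by
  simp only [Tvert.trunc, Tvert.len]
  exact lt_of_le_of_lt (min_le_left _ _) hl

namespace Tvert

/-- `(B_0, …, B_i)` is a family: `B_0 ⊆ T⁰_m` and `B_{j+1} ⊆ J(B_j)` for `j < i`. -/
def IsFamily {m g r : ℕ} (i : ℕ) (Bs : ℕ → Finset (Tvert m g r)) : Prop :=
  i < g ∧ (∀ σ ∈ Bs 0, len σ = 0) ∧ ∀ j < i, Bs (j + 1) ⊆ J (Bs j)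

open scoped Classical in
/-- The part of `J(B)` on which `ψ` vanishes. -/
noncomputable def Jzero {m g r : ℕ} (ψ : Tvert m g r → Bool) (B : Finset (Tvert m g r)) :
    Finset (Tvert m g r) :=
  (J B).filter fun σ => ψ σ = false

/-- A family `(B_0, …, B_i)` is `ψ`-admissible. -/
def IsAdmissible {m g r : ℕ} (qt : ℝ) (ψ : Tvert m g r → Bool)
    (i : ℕ) (Bs : ℕ → Finset (Tvert m g r)) : Prop :=
  IsFamily (g := g) i Bs ∧
    (∀ j ≤ i, ∀ σ ∈ Bs j, ψ σ = false) ∧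
    (qt * m ≤ (Bs 0).card) ∧
    ∀ j < i, qt * (Jzero ψ (Bs j)).card ≤ (Bs (j + 1)).card

/-- A family `(B_0, …, B_i)` is `ψ`-good: it is `ψ`-admissible and in addition
`|J(B_j) ∩ {ψ = 0}| ≥ (q̃r − 1 − δ)(q̃r)^j m` for all `j ≤ i`. -/
def IsGood {m g r : ℕ} (qt δ : ℝ) (ψ : Tvert m g r → Bool)
    (i : ℕ) (Bs : ℕ → Finset (Tvert m g r)) : Prop :=
  IsAdmissible qt ψ i Bs ∧
    ∀ j ≤ i, (qt * r - 1 - δ) * (qt * r) ^ j * m ≤ (Jzero ψ (Bs j)).card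

/-- `ψ` is robust: every `ψ`-admissible family is `ψ`-good. -/
def Robust {m g r : ℕ} (qt δ : ℝ) (ψ : Tvert m g r → Bool) : Prop :=
  ∀ (i : ℕ) (Bs : ℕ → Finset (Tvert m g r)), IsAdmissible qt ψ i Bs → IsGood qt δ ψ i Bs

end Tvert

section Aux
variable {n r m g : ℕ}

namespace Tvert

lemma len_trunc (σ : Tvert m g r) (l : ℕ) : len (trunc σ l) = min l (len σ) := rfl

lemma ext' {σ σ' : Tvert m g r} (h1 : σ.1 = σ'.1) (h2 : len σ = len σ')
    (h3 : ∀ k (hk : k < len σ) (hk' : k < len σ'), σ.2.2 ⟨k, hk⟩ = σ'.2.2 ⟨k, hk'⟩) :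
    σ = σ' := by
  obtain ⟨a, i, p⟩ := σ
  obtain ⟨a', i', p'⟩ := σ'
  simp only at h1
  subst h1
  simp only [len] at h2 h3
  have hi : i = i' := Fin.ext h2
  subst hi
  have hp : p = p' := by
    funext k
    have := h3 k.1 k.2 k.2
    simpa using this
  rw [hp]

lemma trunc_self (σ : Tvert m g r) : trunc σ (len σ) = σ := by
  refine ext' rfl (by simp [len_trunc]) ?_
  intro k hk hk'
  rfl

lemma trunc_trunc (σ : Tvert m g r) {l k : ℕ} (h : l ≤ k) :
    trunc (trunc σ k) l = trunc σ l := by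
  refine ext' rfl ?_ ?_
  · simp only [len_trunc]
    omega
  · intro a ha ha'
    rfl

lemma trunc_eq_of_len_le {σ : Tvert m g r} {l : ℕ} (h : len σ ≤ l) : trunc σ l = σ := by
  refine ext' rfl (by simp [len_trunc]; omega) ?_
  intro k hk hk'
  rfl

end Tvert

private lemma ofFn_congr {α : Type*} {a b : ℕ} (h : a = b) (f : Fin a → α) (g' : Fin b → α)
    (hfg : ∀ k (hk : k < a), f ⟨k, hk⟩ = g' ⟨k, by omega⟩) : List.ofFn f = List.ofFn g' := by
  subst h
  congr 1
  funext k
  simpa using hfg k.1 k.2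

lemma zvert_succ (y : Fin n → Fin r → Fin n) (A : Finset (Fin n)) (hA : A.card = m)
    (σ : Tvert m g r) (i : ℕ) (hi : Tvert.len σ = i + 1) :
    zvert y A hA σ =
      y (zvert y A hA (Tvert.trunc σ i)) (σ.2.2 ⟨i, by simp only [Tvert.len] at hi; omega⟩) := by
  have hq : List.ofFn σ.2.2 = List.ofFn (fun k : Fin (i + 1) => σ.2.2 ⟨k.1, by simp only [Tvert.len] at hi; omega⟩) :=
    ofFn_congr hi _ _ (fun k hk => rfl)
  have hq2 : List.ofFn (Tvert.trunc σ i).2.2 =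
      List.ofFn (fun k : Fin i => σ.2.2 ⟨k.1, by simp only [Tvert.len] at hi; omega⟩) := by
    refine ofFn_congr ?_ _ _ (fun k hk => rfl)
    simp only [Tvert.trunc, Tvert.len] at hi ⊢; omega
  unfold zvert
  rw [hq, hq2, List.ofFn_succ']
  have : (Tvert.trunc σ i).1 = σ.1 := rfl
  rw [this, List.concat_eq_append, List.foldl_append]
  rfl

end Aux
section Aux2
variable {n r m g : ℕ}

lemma psi_len_zero (y : Fin n → Fin r → Fin n) (A : Finset (Fin n)) (hA : A.card = m)
    {σ : Tvert m g r} (h : Tvert.len σ = 0) : psi y A hA σ = false := by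
  rw [psi]
  simp [h]

lemma psi_char (y : Fin n → Fin r → Fin n) (A : Finset (Fin n)) (hA : A.card = m)
    {σ : Tvert m g r} (h : Tvert.len σ ≠ 0)
    (hpre : ∀ l < Tvert.len σ, psi y A hA (Tvert.trunc σ l) = false) :
    psi y A hA σ = decide (zvert y A hA σ ∈ Aseen y A hA σ) := by
  rw [psi]
  rw [dif_neg h]
  have : ((List.range (Tvert.len σ)).any fun l =>
      if hl : l < Tvert.len σ then psi y A hA (Tvert.trunc σ l) else false) = false := by
    rw [List.any_eq_false]
    intro l hl
    rw [List.mem_range] at hl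
    rw [dif_pos hl, hpre l hl]
    simp
  rw [this]
  simp

lemma key_inj {σ σ' : Tvert m g r} (hlen : Tvert.len σ = Tvert.len σ')
    (hkey : Tvert.key σ = Tvert.key σ') : σ = σ' := by
  unfold Tvert.key at hkey
  rw [List.cons_eq_cons] at hkey
  obtain ⟨h1, h2⟩ := hkey
  refine Tvert.ext' (Fin.ext h1) hlen ?_
  intro k hk hk'
  have := List.map_injective_iff.2 Fin.val_injective h2
  have hget := List.getElem_of_eq this (i := k) (by simpa [Tvert.len] using hk)
  simpa using hget

lemma prec_total {σ σ' : Tvert m g r} (h : σ ≠ σ') :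
    Tvert.prec σ σ' ∨ Tvert.prec σ' σ := by
  rcases lt_trichotomy (Tvert.len σ) (Tvert.len σ') with hl | hl | hl
  · exact Or.inl (Or.inl hl)
  · haveI : IsTrichotomous ℕ (· < ·) := ⟨fun a b h1 h2 => by omega⟩
    rcases trichotomous_of (List.Lex (· < ·)) (Tvert.key σ) (Tvert.key σ') with hk | hk | hk
    · exact Or.inl (Or.inr ⟨hl, hk⟩)
    · exact absurd (key_inj hl hk) h
    · exact Or.inr (Or.inr ⟨hl.symm, hk⟩)
  · exact Or.inr (Or.inl hl)

end Aux2
/-- **Equation (2) in Lemma 2.3.** For a fixed realization of the graph and of the dual driving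
variables, with `B_0 = {σ ∈ T⁰_m : z^σ gives birth at time 0}` and
`B_{j+1} = {σ ∈ J(B_j) : ψ(A)(σ) = 0 and z^σ gives birth at time j+1}`, one has
`|ξ̂^A_j| ≥ |J(B_{j-1}) ∩ {ψ(A) = 0}|` for `1 ≤ j ≤ g`. -/
theorem dual_growth_from_family
    (n r g m : ℕ) (hr : 1 ≤ r) (hg : 1 ≤ g) (hn : r < n)
    (y : Fin n → Fin r → Fin n) (hy : IsGraph y)
    (Bh : Fin n → ℕ → Bool)
    (A : Finset (Fin n)) (hA : A.card = m)
    (Bs : ℕ → Finset (Tvert m g r))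
    (hB0 : Bs 0 = Finset.univ.filter fun σ : Tvert m g r =>
      Tvert.len σ = 0 ∧
        xihat y Bh (fun v => decide (v ∈ A)) 0 (zvert y A hA σ) = true ∧
        Bh (zvert y A hA σ) 0 = true)
    (hBsucc : ∀ j : ℕ, j ≤ g - 2 →
      Bs (j + 1) = (Tvert.J (Bs j)).filter fun σ =>
        psi y A hA σ = false ∧
          xihat y Bh (fun v => decide (v ∈ A)) (j + 1) (zvert y A hA σ) = true ∧
          Bh (zvert y A hA σ) (j + 1) = true) :
    ∀ j : ℕ, 1 ≤ j → j ≤ g →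
      (Tvert.Jzero (psi y A hA) (Bs (j - 1))).card ≤
        numOnes (xihat y Bh (fun v => decide (v ∈ A)) j) := by
  set ξ0 : Fin n → Bool := fun v => decide (v ∈ A) with hξ0
  have Inv : ∀ t, t ≤ g - 1 → ∀ σ ∈ Bs t,
      Tvert.len σ = t ∧
      (∀ l ≤ t, psi y A hA (Tvert.trunc σ l) = false) ∧
      xihat y Bh ξ0 t (zvert y A hA σ) = true ∧
      Bh (zvert y A hA σ) t = true := by
    intro t
    induction t with
    | zero =>
      intro _ σ hσ
      rw [hB0] at hσ
      simp only [Finset.mem_filter, Finset.mem_univ, true_and] at hσ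
      obtain ⟨h0, hocc, hb⟩ := hσ
      refine ⟨h0, ?_, hocc, hb⟩
      intro l hl
      have hl0 : l = 0 := by omega
      subst hl0
      have htr : Tvert.trunc σ 0 = σ := Tvert.trunc_eq_of_len_le (by omega)
      rw [htr]
      exact psi_len_zero y A hA h0
    | succ t ih =>
      intro ht σ' hσ'
      have ht2 : t ≤ g - 2 := by omega
      rw [hBsucc t ht2] at hσ'
      simp only [Finset.mem_filter] at hσ'
      obtain ⟨hJ, hψ, hocc, hb⟩ := hσ'
      classical
      rw [Tvert.J, Finset.mem_filter] at hJ
      simp only [Tvert.edge, Finset.mem_univ, true_and] at hJ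
      obtain ⟨σ, hσB, hlen', htr⟩ := hJ
      obtain ⟨hlenσ, hpre, -, -⟩ := ih (by omega) σ hσB
      have hlen : Tvert.len σ' = t + 1 := by omega
      refine ⟨hlen, ?_, hocc, hb⟩
      intro l hl
      rcases Nat.lt_or_ge l (t + 1) with h | h
      · have h1 := Tvert.trunc_trunc σ' (k := Tvert.len σ) (by omega : l ≤ Tvert.len σ)
        rw [htr] at h1
        rw [← h1]
        exact hpre l (by omega)
      · have htr' : Tvert.trunc σ' l = σ' := Tvert.trunc_eq_of_len_le (by omega)
        rw [htr']
        exact hψ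
  have occJ : ∀ t, t ≤ g - 1 → ∀ σ' ∈ Tvert.J (Bs t),
      xihat y Bh ξ0 (t + 1) (zvert y A hA σ') = true := by
    intro t ht σ' hJ
    classical
    rw [Tvert.J, Finset.mem_filter] at hJ
    simp only [Tvert.edge, Finset.mem_univ, true_and] at hJ
    obtain ⟨σ, hσB, hlen', htr⟩ := hJ
    obtain ⟨hlenσ, -, hocc, hb⟩ := Inv t ht σ hσB
    have hz := zvert_succ y A hA σ' (Tvert.len σ) hlen'
    rw [htr] at hz
    simp only [xihat, decide_eq_true_eq]
    exact ⟨zvert y A hA σ, _, hz.symm, hocc, hb⟩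
  intro j hj1 hjg
  have hjt : j = (j - 1) + 1 := by omega
  set t := j - 1 with htdef
  have hlt : t ≤ g - 1 := by omega
  rw [hjt]
  have key : ∀ σ1 σ2, σ1 ∈ Tvert.Jzero (psi y A hA) (Bs t) →
      σ2 ∈ Tvert.Jzero (psi y A hA) (Bs t) →
      Tvert.prec σ1 σ2 → zvert y A hA σ1 ≠ zvert y A hA σ2 := by
    intro σ1 σ2 h1 h2 hp heq
    simp only [Tvert.Jzero, Finset.mem_filter] at h1 h2
    obtain ⟨hJ2, hψ2⟩ := h2
    classical
    rw [Tvert.J, Finset.mem_filter] at hJ2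
    simp only [Tvert.edge, Finset.mem_univ, true_and] at hJ2
    obtain ⟨σp, hσpB, hlen2, htr2⟩ := hJ2
    obtain ⟨hlenp, hprep, -, -⟩ := Inv t hlt σp hσpB
    have hpre2 : ∀ l < Tvert.len σ2, psi y A hA (Tvert.trunc σ2 l) = false := by
      intro l hl
      rcases Nat.lt_or_ge l (Tvert.len σp + 1) with h | h
      · have h1' := Tvert.trunc_trunc σ2 (k := Tvert.len σp) (by omega : l ≤ Tvert.len σp)
        rw [htr2] at h1'
        rw [← h1']
        exact hprep l (by omega)
      · omega
    have hchar := psi_char y A hA (by omega) hpre2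
    rw [hψ2] at hchar
    have hnot : zvert y A hA σ2 ∉ Aseen y A hA σ2 := by
      intro hmem
      rw [decide_eq_true hmem] at hchar
      exact Bool.false_ne_true hchar
    apply hnot
    rw [← heq]
    simp only [Aseen, Finset.mem_image]
    refine ⟨σ1, ?_, rfl⟩
    simp only [Finset.mem_filter, Finset.mem_univ, true_and]
    exact hp
  unfold numOnes
  apply Finset.card_le_card_of_injOn (zvert y A hA)
  · intro σ' hσ'
    simp only [Finset.mem_coe, Finset.mem_filter, Finset.mem_univ, true_and]
    have hJ : σ' ∈ Tvert.J (Bs t) := by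
      simp only [Finset.mem_coe, Tvert.Jzero, Finset.mem_filter] at hσ'
      exact hσ'.1
    exact occJ t hlt σ' hJ
  · intro σ hσ σ'' hσ'' heq
    by_contra hne
    rcases prec_total hne with hp | hp
    · exact key σ σ'' hσ hσ'' hp heq
    · exact key σ'' σ hσ'' hσ hp heq.symm
end
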